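/- arXiv:1902.02285 — 3 statements merged into one kernel-verified Lean document; each statement's English description precedes it below -/
import Mathlib

section
/- Let A be an n×n complex matrix, θ ∈ ℂ, u ∈ ℂⁿ a unit vector, t, w ∈ ℂⁿ, k ∈ ℂ, and set E = k·u·w*. If the stationarity condition −(I−uu*)E*(u + (I−uu*)t) + (I−uu*)((A−θI)*(A−θI) + E)u = 0 holds, then the component of w orthogonal to u is determined by conj(k)·(I−uu*)w = ((A−θI)*(A−θI) − ‖(A−θI)u‖²·I)u; in particular, for k ≠ 0 the component of w orthogonal to u is parallel to ((A−θI)*(A−θI) − ‖(A−θI)u‖²·I)u. -/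
open scoped ComplexInnerProductSpace Matrix

/-- The action of a matrix on a vector of `EuclideanSpace ℂ (Fin n)`. -/
noncomputable def mApp {n : ℕ} (A : Matrix (Fin n) (Fin n) ℂ)
    (v : EuclideanSpace ℂ (Fin n)) : EuclideanSpace ℂ (Fin n) :=
  Matrix.toEuclideanLin A v

/-- The orthogonal projection `(I - uu*) t = t - ⟪u, t⟫ u` onto the orthogonal
complement of the unit vector `u`. -/
noncomputable def proj {n : ℕ} (u t : EuclideanSpace ℂ (Fin n)) :
    EuclideanSpace ℂ (Fin n) :=
  t - ⟪u, t⟫ • u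

/-- The rank-one matrix `u·w*` with entries `u i * conj (w j)`. -/
noncomputable def outer {n : ℕ} (u w : EuclideanSpace ℂ (Fin n)) :
    Matrix (Fin n) (Fin n) ℂ :=
  Matrix.of fun i j => u i * star (w j)

lemma mApp_apply {n : ℕ} (A : Matrix (Fin n) (Fin n) ℂ) (v : EuclideanSpace ℂ (Fin n))
    (i : Fin n) : mApp A v i = ∑ j, A i j * v j := rfl

lemma mApp_mul {n : ℕ} (M N : Matrix (Fin n) (Fin n) ℂ) (v : EuclideanSpace ℂ (Fin n)) :
    mApp (M * N) v = mApp M (mApp N v) := by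
  ext i
  simp [mApp_apply, Matrix.mul_apply, Finset.sum_mul, Finset.mul_sum]
  rw [Finset.sum_comm]
  exact Finset.sum_congr rfl fun j _ => Finset.sum_congr rfl fun l _ => by ring

lemma mApp_add {n : ℕ} (M N : Matrix (Fin n) (Fin n) ℂ) (v : EuclideanSpace ℂ (Fin n)) :
    mApp (M + N) v = mApp M v + mApp N v := by
  ext i; simp [mApp_apply, Matrix.add_apply, add_mul, Finset.sum_add_distrib]

lemma mApp_outer_conjT {n : ℕ} (k : ℂ) (u w v : EuclideanSpace ℂ (Fin n)) :
    mApp (k • outer u w)ᴴ v = (starRingEnd ℂ k * ⟪u, v⟫) • w := by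
  ext i
  simp [mApp_apply, outer, Matrix.conjTranspose_apply, PiLp.inner_apply,
    Finset.mul_sum, Finset.sum_mul, PiLp.smul_apply, smul_eq_mul]
  exact Finset.sum_congr rfl fun j _ => by ring

lemma mApp_outer_smul {n : ℕ} (k : ℂ) (u w v : EuclideanSpace ℂ (Fin n)) :
    mApp (k • outer u w) v = (k * ⟪w, v⟫) • u := by
  ext i
  simp [mApp_apply, outer, PiLp.inner_apply, Finset.mul_sum, PiLp.smul_apply, smul_eq_mul]
  rw [Finset.sum_mul]
  exact Finset.sum_congr rfl fun j _ => by ring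

lemma inner_mApp_conjT {n : ℕ} (A : Matrix (Fin n) (Fin n) ℂ)
    (x v : EuclideanSpace ℂ (Fin n)) : ⟪x, mApp Aᴴ v⟫ = ⟪mApp A x, v⟫ := by
  show ⟪x, Matrix.toEuclideanLin Aᴴ v⟫ = _
  rw [Matrix.toEuclideanLin_conjTranspose_eq_adjoint, LinearMap.adjoint_inner_right]
  rfl

lemma proj_add {n : ℕ} (u a b : EuclideanSpace ℂ (Fin n)) :
    proj u (a + b) = proj u a + proj u b := by
  simp only [proj, inner_add_right, add_smul]; abel

lemma proj_smul {n : ℕ} (u : EuclideanSpace ℂ (Fin n)) (c : ℂ) (a : EuclideanSpace ℂ (Fin n)) :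
    proj u (c • a) = c • proj u a := by
  simp only [proj, inner_smul_right, smul_sub, smul_smul]

lemma inner_self_one {n : ℕ} (u : EuclideanSpace ℂ (Fin n)) (hu : ‖u‖ = 1) :
    ⟪u, u⟫ = 1 := by
  rw [inner_self_eq_norm_sq_to_K, hu]; norm_num

lemma proj_self {n : ℕ} (u : EuclideanSpace ℂ (Fin n)) (hu : ‖u‖ = 1) :
    proj u u = 0 := by
  simp [proj, inner_self_one u hu, hu]

lemma inner_proj {n : ℕ} (u t : EuclideanSpace ℂ (Fin n)) (hu : ‖u‖ = 1) :
    ⟪u, proj u t⟫ = 0 := by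
  simp [proj, inner_sub_right, inner_smul_right, inner_self_one u hu, hu]

theorem stmt3 {n : ℕ} (A : Matrix (Fin n) (Fin n) ℂ) (θ : ℂ)
    (u : EuclideanSpace ℂ (Fin n)) (hu : ‖u‖ = 1)
    (t w : EuclideanSpace ℂ (Fin n)) (k : ℂ)
    (E : Matrix (Fin n) (Fin n) ℂ) (hE : E = k • outer u w)
    (hstat : -proj u (mApp Eᴴ (u + proj u t)) +
        proj u (mApp ((A - θ • 1)ᴴ * (A - θ • 1) + E) u) = 0) :
    (starRingEnd ℂ) k • proj u w =
      mApp ((A - θ • 1)ᴴ * (A - θ • 1)) u - ((‖mApp (A - θ • 1) u‖ : ℂ) ^ 2) • u ∧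
    (k ≠ 0 → ∃ c : ℂ, proj u w =
      c • (mApp ((A - θ • 1)ᴴ * (A - θ • 1)) u - ((‖mApp (A - θ • 1) u‖ : ℂ) ^ 2) • u)) := by
  set C := A - θ • 1 with hC
  set B := Cᴴ * C with hB
  have h1 : mApp Eᴴ (u + proj u t) = (starRingEnd ℂ k) • w := by
    rw [hE, mApp_outer_conjT, inner_add_right, inner_self_one u hu, inner_proj u t hu]
    simp
  have h2 : proj u (mApp (B + E) u) = proj u (mApp B u) := by
    rw [mApp_add, hE, mApp_outer_smul, proj_add, proj_smul, proj_self u hu, smul_zero, add_zero]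
  rw [h1, h2, proj_smul] at hstat
  have hmain : (starRingEnd ℂ) k • proj u w = proj u (mApp B u) := by
    have := hstat
    rw [neg_add_eq_zero] at this
    exact this
  have hinner : ⟪u, mApp B u⟫ = (‖mApp C u‖ : ℂ) ^ 2 := by
    rw [hB, mApp_mul, inner_mApp_conjT, inner_self_eq_norm_sq_to_K]
    norm_num
  have hfinal : (starRingEnd ℂ) k • proj u w =
      mApp B u - ((‖mApp C u‖ : ℂ) ^ 2) • u := by
    rw [hmain, proj, hinner]
  refine ⟨hfinal, fun hk => ⟨((starRingEnd ℂ) k)⁻¹, ?_⟩⟩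
  have hk' : (starRingEnd ℂ) k ≠ 0 := by simpa using hk
  rw [← hfinal, smul_smul, inv_mul_cancel₀ hk', one_smul]
end

section
/- Let A be an n×n Hermitian complex matrix, u ∈ ℂⁿ a unit vector, and t ∈ ℂⁿ with v := (I−uu*)t ≠ 0. For a nonzero vector z, write ρ(z) = ⟨z, Az⟩/‖z‖² for its Rayleigh quotient. Suppose τ is a scalar such that s := u + τ·v satisfies ρ(s) ≤ ρ(z) for every nonzero z in the span of {u, v}. Let J := (I−uu*)(A − ρ(s)·I)(I−uu*). Then ⟨J(u−s), u−s⟩ = ρ(u) − ρ(s). -/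
open scoped ComplexInnerProductSpace Matrix

/-- The (real) Rayleigh quotient `⟪z, Az⟫ / ‖z‖²` of a nonzero vector `z`
with respect to a Hermitian matrix `A`. -/
noncomputable def rayleigh {n : ℕ} (A : Matrix (Fin n) (Fin n) ℂ)
    (z : EuclideanSpace ℂ (Fin n)) : ℝ :=
  (⟪z, mApp A z⟫).re / ‖z‖ ^ 2

lemma mApp_sub_smul_one {m : ℕ} (A : Matrix (Fin m) (Fin m) ℂ) (c : ℂ)
    (x : EuclideanSpace ℂ (Fin m)) :
    mApp (A - c • 1) x = mApp A x - c • x := by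
  apply PiLp.ext; intro i
  simp [mApp, Matrix.toEuclideanLin_apply, Matrix.sub_mulVec, Matrix.smul_mulVec,
    Matrix.one_mulVec]

lemma quad_coeff_zero (a b : ℝ) (h : ∀ c : ℝ, 0 ≤ a * c ^ 2 + 2 * b * c) : b = 0 := by
  have hd : (0:ℝ) < |a| + 1 := by positivity
  have h1 := h (-b / (|a| + 1))
  have h2 : a * (-b / (|a| + 1)) ^ 2 + 2 * b * (-b / (|a| + 1))
      = (a * b ^ 2 - 2 * b ^ 2 * (|a| + 1)) / (|a| + 1) ^ 2 := by
    field_simp; ring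
  rw [h2] at h1
  have h3 : 0 ≤ a * b ^ 2 - 2 * b ^ 2 * (|a| + 1) := by
    rcases div_nonneg_iff.mp h1 with ⟨h,_⟩ | ⟨_,h⟩
    · exact h
    · nlinarith [sq_nonneg (|a| + 1)]
  nlinarith [le_abs_self a, sq_nonneg b, abs_nonneg a]

set_option maxHeartbeats 1000000 in
theorem stmt6 {n : ℕ} (A : Matrix (Fin n) (Fin n) ℂ) (hA : A.IsHermitian)
    (u : EuclideanSpace ℂ (Fin n)) (hu : ‖u‖ = 1)
    (t : EuclideanSpace ℂ (Fin n)) (hv : proj u t ≠ 0)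
    (τ : ℂ) (s : EuclideanSpace ℂ (Fin n)) (hs : s = u + τ • proj u t)
    (hmin : ∀ z ∈ Submodule.span ℂ ({u, proj u t} : Set (EuclideanSpace ℂ (Fin n))),
      z ≠ 0 → rayleigh A s ≤ rayleigh A z) :
    ⟪proj u (mApp (A - (rayleigh A s : ℂ) • 1) (proj u (u - s))), u - s⟫ =
      ((rayleigh A u - rayleigh A s : ℝ) : ℂ) := by
  set v := proj u t with hvdef
  set T := Matrix.toEuclideanLin A with hT
  have hsym : ∀ x y : EuclideanSpace ℂ (Fin n), ⟪T x, y⟫ = ⟪x, T y⟫ :=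
    Matrix.isHermitian_iff_isSymmetric.mp hA
  have hmA : ∀ x, mApp A x = T x := fun x => rfl
  have huu : ⟪u, u⟫ = 1 := by
    rw [@inner_self_eq_norm_sq_to_K ℂ, hu]; norm_num
  have huv : ⟪u, v⟫ = 0 := by
    rw [hvdef, proj, inner_sub_right, inner_smul_right, huu, mul_one, sub_self]
  have hvu : ⟪v, u⟫ = 0 := by
    rw [← inner_conj_symm, huv, map_zero]
  clear_value v T
  rcases eq_or_ne τ 0 with h0 | h0
  · have hsu : s = u := by simp [hs, h0]
    rw [hsu, sub_self]
    rw [show proj u (0 : EuclideanSpace ℂ (Fin n)) = 0 by simp [proj]]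
    rw [show mApp (A - ((rayleigh A u : ℝ) : ℂ) • 1) 0 = 0 from map_zero _]
    rw [show proj u (0 : EuclideanSpace ℂ (Fin n)) = 0 by simp [proj]]
    simp
  set ρ : ℝ := rayleigh A s with hρ
  set α : ℂ := ⟪u, T u⟫ with hα
  set β : ℂ := ⟪u, T v⟫ with hβ
  set γ : ℂ := ⟪v, T v⟫ with hγ
  set nv : ℝ := ‖v‖ ^ 2 with hnv
  set nτ : ℝ := ‖τ‖ ^ 2 with hnτ
  clear_value ρ α β γ nv nτ
  have hvv : ⟪v, v⟫ = (nv : ℂ) := by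
    rw [@inner_self_eq_norm_sq_to_K ℂ, hnv]; norm_cast
  have hαr : (starRingEnd ℂ) α = α := by rw [hα, inner_conj_symm, hsym]
  have hγr : (starRingEnd ℂ) γ = γ := by rw [hγ, inner_conj_symm, hsym]
  have hβc : ⟪v, T u⟫ = (starRingEnd ℂ) β := by rw [hβ, ← inner_conj_symm, hsym]
  have hαim : α.im = 0 := by
    have h := congrArg Complex.im hαr
    rw [Complex.conj_im] at h; linarith
  have hγim : γ.im = 0 := by
    have h := congrArg Complex.im hγr
    rw [Complex.conj_im] at h; linarith
  have hus : ⟪u, s⟫ = 1 := by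
    rw [hs, inner_add_right, inner_smul_right, huu, huv, mul_zero, add_zero]
  have hsu2 : ⟪s, u⟫ = 1 := by rw [← inner_conj_symm, hus, map_one]
  have hTs : T s = T u + τ • T v := by rw [hs, map_add, map_smul]
  have huAs : ⟪u, T s⟫ = α + τ * β := by
    rw [hTs, inner_add_right, inner_smul_right, ← hα, ← hβ]
  have hsAu : ⟪s, T u⟫ = (starRingEnd ℂ) (α + τ * β) := by
    rw [← inner_conj_symm, hsym, huAs]
  have hconjmul : (starRingEnd ℂ) τ * τ = ((nτ : ℝ) : ℂ) := by
    rw [Complex.conj_mul', hnτ]; push_cast; ring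
  have hss : ⟪s, s⟫ = ((1 + nτ * nv : ℝ) : ℂ) := by
    rw [hs, inner_add_left, inner_add_right, inner_add_right, inner_smul_left,
      inner_smul_right, inner_smul_left, inner_smul_right, huu, huv, hvu, hvv]
    rw [show (starRingEnd ℂ) τ * (τ * (nv : ℂ)) = ((starRingEnd ℂ) τ * τ) * nv by ring,
      hconjmul]
    push_cast; ring
  have hsAs : ⟪s, T s⟫ = α + τ * β + (starRingEnd ℂ) (τ * β) + ((nτ : ℝ) : ℂ) * γ := by
    rw [hTs, hs, inner_add_left, inner_add_right, inner_add_right, inner_smul_left,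
      inner_smul_right, inner_smul_left, inner_smul_right, ← hα, ← hβ, ← hγ, hβc]
    rw [show (starRingEnd ℂ) τ * (τ * γ) = ((starRingEnd ℂ) τ * τ) * γ by ring, hconjmul]
    rw [map_mul]
    ring
  have hns : ‖s‖ ^ 2 = 1 + nτ * nv := by
    have h := hss
    rw [@inner_self_eq_norm_sq_to_K ℂ] at h
    have h2 : ((‖s‖ ^ 2 : ℝ) : ℂ) = ((1 + nτ * nv : ℝ) : ℂ) := by push_cast at h ⊢; exact h
    exact Complex.ofReal_inj.mp h2
  have hnv0 : 0 < nv := by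
    rw [hnv]; exact pow_pos (norm_pos_iff.mpr hv) 2
  have hnτ0 : 0 < nτ := by
    rw [hnτ]; exact pow_pos (norm_pos_iff.mpr h0) 2
  have hns0 : 0 < ‖s‖ ^ 2 := by rw [hns]; linarith [mul_pos hnτ0 hnv0]
  have hρs : ρ * ‖s‖ ^ 2 = (⟪s, T s⟫).re := by
    rw [hρ, rayleigh, hmA]
    field_simp
    have hsn : ‖s‖ ≠ 0 := by intro h; rw [h] at hns0; simp at hns0
    rw [mul_div_assoc, div_self hsn, mul_one]
  have hρu : rayleigh A u = α.re := by
    rw [rayleigh, hmA, hu, ← hα]; norm_num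
  have humem : u ∈ Submodule.span ℂ ({u, v} : Set (EuclideanSpace ℂ (Fin n))) :=
    Submodule.subset_span (Set.mem_insert _ _)
  have hvmem : v ∈ Submodule.span ℂ ({u, v} : Set (EuclideanSpace ℂ (Fin n))) :=
    Submodule.subset_span (Set.mem_insert_of_mem _ rfl)
  have hsmem : s ∈ Submodule.span ℂ ({u, v} : Set (EuclideanSpace ℂ (Fin n))) := by
    rw [hs]; exact Submodule.add_mem _ humem (Submodule.smul_mem _ _ hvmem)
  have hb : (α + τ * β).re - ρ = 0 := by
    apply quad_coeff_zero (α.re - ρ)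
    intro c
    set z : EuclideanSpace ℂ (Fin n) := s + (c : ℂ) • u with hz
    have hzmem : z ∈ Submodule.span ℂ ({u, v} : Set (EuclideanSpace ℂ (Fin n))) :=
      Submodule.add_mem _ hsmem (Submodule.smul_mem _ _ humem)
    have hzz : ⟪z, z⟫ = ((1 + nτ * nv + 2 * c + c ^ 2 : ℝ) : ℂ) := by
      rw [hz, inner_add_left, inner_add_right, inner_add_right, inner_smul_left,
        inner_smul_right, inner_smul_left, inner_smul_right, hss, hus, hsu2, huu]
      rw [Complex.conj_ofReal]
      push_cast; ring
    have hnz : ‖z‖ ^ 2 = 1 + nτ * nv + 2 * c + c ^ 2 := by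
      have h := hzz
      rw [@inner_self_eq_norm_sq_to_K ℂ] at h
      have h2 : ((‖z‖ ^ 2 : ℝ) : ℂ) = ((1 + nτ * nv + 2 * c + c ^ 2 : ℝ) : ℂ) := by
        push_cast at h ⊢; exact h
      exact Complex.ofReal_inj.mp h2
    have hnz0 : 0 < ‖z‖ ^ 2 := by
      have h1 : 1 + nτ * nv + 2 * c + c ^ 2 = (1 + c) ^ 2 + nτ * nv := by ring
      rw [hnz, h1]
      exact add_pos_of_nonneg_of_pos (sq_nonneg _) (mul_pos hnτ0 hnv0)
    have hzne : z ≠ 0 := by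
      intro h
      rw [h] at hnz0; simp at hnz0
    have hTz : T z = T s + (c : ℂ) • T u := by rw [hz, map_add, map_smul]
    have hsAu' : (⟪s, T u⟫).re = (α + τ * β).re := by
      rw [hsAu, Complex.conj_re]
    have hzAz : (⟪z, T z⟫).re
        = (⟪s, T s⟫).re + 2 * c * (α + τ * β).re + c ^ 2 * α.re := by
      rw [hz, hTz, inner_add_left, inner_add_right, inner_add_right, inner_smul_left,
        inner_smul_right, inner_smul_left, inner_smul_right, ← hα]
      rw [Complex.conj_ofReal]
      simp only [Complex.add_re, Complex.mul_re, Complex.ofReal_re, Complex.ofReal_im,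
        Complex.mul_im]
      rw [huAs] at *
      rw [hsAu']
      simp only [Complex.add_re, Complex.mul_re]
      ring
    have hle := hmin z hzmem hzne
    rw [rayleigh, hmA] at hle
    have hle2 : ρ * ‖z‖ ^ 2 ≤ (⟪z, T z⟫).re := (le_div_iff₀ hnz0).mp hle
    rw [hzAz, hnz] at hle2
    have hsum : ρ * (1 + nτ * nv) = (⟪s, T s⟫).re := by rw [← hns]; exact hρs
    linarith [hle2, hsum]
  have hsAsre : (⟪s, T s⟫).re = α.re + 2 * (τ * β).re + nτ * γ.re := by
    rw [hsAs]
    simp only [Complex.add_re, Complex.mul_re, Complex.conj_re, Complex.conj_im,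
      Complex.ofReal_re, Complex.ofReal_im]
    ring
  have hkey : nτ * (γ.re - ρ * nv) = α.re - ρ := by
    have h1 : (τ * β).re = ρ - α.re := by
      have h' : (α + τ * β).re = α.re + (τ * β).re := Complex.add_re _ _
      rw [h'] at hb; linarith
    have h2 : ρ * (1 + nτ * nv) = α.re + 2 * (τ * β).re + nτ * γ.re := by
      rw [← hns, hρs, hsAsre]
    rw [h1] at h2
    nlinarith [h2]
  have hups : proj u (u - s) = u - s := by
    rw [proj, hs]
    rw [inner_sub_right, inner_add_right, inner_smul_right, huu, huv]
    simp
  have hus' : u - s = -(τ • v) := by rw [hs]; abel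
  have hmApp2 : mApp (A - ((ρ : ℝ) : ℂ) • 1) (u - s) = -(τ • (T v - ((ρ : ℝ) : ℂ) • v)) := by
    rw [mApp_sub_smul_one, hus', hmA]
    rw [map_neg, map_smul]
    rw [smul_sub]
    module
  have hprojw : proj u (mApp (A - ((ρ : ℝ) : ℂ) • 1) (u - s))
      = -(τ • (T v - ((ρ : ℝ) : ℂ) • v)) - (-(τ * β) + τ * ((ρ : ℝ) : ℂ) * 0) • u := by
    rw [proj, hmApp2, inner_neg_right, inner_smul_right, inner_sub_right,
      inner_smul_right, ← hβ, huv]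
    ring_nf
  have hTvv : ⟪T v, v⟫ = γ := by rw [hsym, ← hγ]
  have hγval : γ = ((γ.re : ℝ) : ℂ) := by
    apply Complex.ext <;> simp [hγim]
  rw [hups, hprojw, hus']
  simp only [inner_sub_left, inner_neg_left, inner_neg_right, inner_smul_left,
    inner_smul_right, hTvv, hvv, huv, mul_zero, sub_zero, add_zero, neg_neg, neg_zero,
    zero_sub, sub_neg_eq_add, Complex.conj_ofReal]
  rw [hρu, ← hkey, hγval]
  push_cast
  simp only [Complex.ofReal_re]
  linear_combination (((γ.re : ℝ) : ℂ) - ((ρ : ℝ) : ℂ) * ((nv : ℝ) : ℂ)) * hconjmul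
end

section
/- Let A be an n×n Hermitian complex matrix, ρ ∈ ℝ a real number that is not an eigenvalue of A (so A−ρI is invertible), u ∈ ℂⁿ a unit vector, and u' := (A−ρI)^{-2}u / ‖(A−ρI)^{-2}u‖. Then ⟨u', u⟩ is real and positive, and (A−ρI)²u' = (‖(A−ρI)u'‖² / ⟨u', u⟩) · u. -/
open scoped ComplexInnerProductSpace Matrix

/-- `μ` is an eigenvalue of the matrix `A`. -/
def IsEigenvalue {n : ℕ} (A : Matrix (Fin n) (Fin n) ℂ) (μ : ℂ) : Prop :=
  ∃ x : EuclideanSpace ℂ (Fin n), x ≠ 0 ∧ mApp A x = μ • x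

lemma mApp_one {n : ℕ} (v : EuclideanSpace ℂ (Fin n)) : mApp 1 v = v := by
  simp [mApp, Matrix.toEuclideanLin_apply]

lemma mApp_smulv {n : ℕ} (M : Matrix (Fin n) (Fin n) ℂ) (c : ℝ) (v : EuclideanSpace ℂ (Fin n)) :
    mApp M (c • v) = c • mApp M v := by
  have : c • v = (c : ℂ) • v := by simp
  rw [this, mApp]
  rw [map_smul]
  simp [mApp]


theorem stmt12 {n : ℕ} (A : Matrix (Fin n) (Fin n) ℂ) (hA : A.IsHermitian)
    (ρ : ℝ) (hρ : ¬ IsEigenvalue A (ρ : ℂ))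
    (u : EuclideanSpace ℂ (Fin n)) (hu : ‖u‖ = 1)
    (u' : EuclideanSpace ℂ (Fin n))
    (hu' : u' = ‖mApp ((A - (ρ : ℂ) • 1)⁻¹ ^ 2) u‖⁻¹ • mApp ((A - (ρ : ℂ) • 1)⁻¹ ^ 2) u) :
    (⟪u', u⟫ : ℂ).im = 0 ∧ 0 < (⟪u', u⟫ : ℂ).re ∧
      mApp ((A - (ρ : ℂ) • 1) ^ 2) u' =
        (((‖mApp (A - (ρ : ℂ) • 1) u'‖ ^ 2 : ℝ) : ℂ) / ⟪u', u⟫) • u := by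
  set B := A - (ρ : ℂ) • 1 with hBdef
  -- B is a unit
  have hker : ∀ x : EuclideanSpace ℂ (Fin n), mApp B x = 0 → x = 0 := by
    intro x hx
    by_contra hxne
    apply hρ
    refine ⟨x, hxne, ?_⟩
    have : mApp B x = mApp A x - (ρ : ℂ) • x := by
      simp only [mApp, hBdef, map_sub, map_smul]
      simp [Matrix.toEuclideanLin_apply]
    rw [this] at hx
    linear_combination (norm := module) hx
  have hBunit : IsUnit B := by
    rw [← Matrix.mulVec_injective_iff_isUnit, ← Matrix.coe_mulVecLin,
      injective_iff_map_eq_zero]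
    intro x hx
    have := hker ((WithLp.equiv 2 _).symm x) ?_
    · simpa using congrArg (WithLp.equiv 2 _) this
    · rw [mApp, WithLp.equiv_symm_apply, Matrix.toEuclideanLin_apply_piLp_toLp]
      simp only [Matrix.coe_mulVecLin] at hx
      simp [hx]
  have hBdet : IsUnit B.det := (Matrix.isUnit_iff_isUnit_det B).mp hBunit
  have hiB : B * B⁻¹ = 1 := Matrix.mul_nonsing_inv B hBdet
  have hBi : B⁻¹ * B = 1 := Matrix.nonsing_inv_mul B hBdet
  have hBH : B.IsHermitian := by
    refine hA.sub ?_
    simp [Matrix.IsHermitian, Matrix.conjTranspose_smul, Complex.star_def,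
      Complex.conj_ofReal]
  have hBiH : B⁻¹.IsHermitian := hBH.inv
  have hsymm := (Matrix.isHermitian_iff_isSymmetric.mp hBiH)
  set w : EuclideanSpace ℂ (Fin n) := mApp (B⁻¹ ^ 2) u with hw
  set v : EuclideanSpace ℂ (Fin n) := mApp B⁻¹ u with hv
  have hwv : w = mApp B⁻¹ v := by rw [hw, hv, pow_two, mApp_mul]
  have hune : u ≠ 0 := by intro h; rw [h, norm_zero] at hu; norm_num at hu
  have hvne : v ≠ 0 := by
    intro h
    apply hune
    have : mApp (B * B⁻¹) u = u := by rw [hiB, mApp_one]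
    rw [mApp_mul, ← hv, h] at this
    rw [← this, mApp]; simp
  have hB2 : B ^ 2 * B⁻¹ ^ 2 = 1 := by
    rw [pow_two, pow_two, Matrix.mul_assoc, ← Matrix.mul_assoc B B⁻¹, hiB,
      Matrix.one_mul, hiB]
  have hB2w : mApp (B ^ 2) w = u := by
    rw [hw, ← mApp_mul, hB2, mApp_one]
  have hwne : w ≠ 0 := by
    intro h
    apply hune; rw [← hB2w, h, mApp]; simp
  have hBw : mApp B w = v := by
    have : B * B⁻¹ ^ 2 = B⁻¹ := by
      rw [pow_two, ← Matrix.mul_assoc, hiB, Matrix.one_mul]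
    rw [hw, ← mApp_mul, this, ← hv]
  -- inner product
  have hinner_wu : (⟪w, u⟫ : ℂ) = ((‖v‖ ^ 2 : ℝ) : ℂ) := by
    rw [hwv]
    have := hsymm v u
    simp only [mApp] at *
    rw [this, ← hv]
    exact_mod_cast inner_self_eq_norm_sq_to_K v
  have hwpos : 0 < ‖w‖ := norm_pos_iff.mpr hwne
  have hvpos : 0 < ‖v‖ := norm_pos_iff.mpr hvne
  set r : ℝ := ‖w‖⁻¹ * ‖v‖ ^ 2 with hr
  have hrpos : 0 < r := by positivity
  have hinner : (⟪u', u⟫ : ℂ) = (r : ℂ) := by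
    rw [hu']
    have : (‖w‖⁻¹ : ℝ) • w = ((‖w‖⁻¹ : ℝ) : ℂ) • w := by
      rw [Complex.coe_smul]
    rw [this, inner_smul_left, hinner_wu, hr, Complex.conj_ofReal]
    push_cast
    ring
  refine ⟨by rw [hinner]; simp, by rw [hinner]; simpa using hrpos, ?_⟩
  -- third part
  have hBu' : mApp B u' = ‖w‖⁻¹ • v := by
    rw [hu', mApp_smulv, hBw]
  have hB2u' : mApp (B ^ 2) u' = (‖w‖⁻¹ : ℝ) • u := by
    rw [hu', mApp_smulv, hB2w]
  rw [hB2u', hBu', hinner]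
  have hnorm : ‖(‖w‖⁻¹ : ℝ) • v‖ ^ 2 = ‖w‖⁻¹ ^ 2 * ‖v‖ ^ 2 := by
    rw [norm_smul]; simp [mul_pow]
  rw [hnorm]
  have hcoef : ((‖w‖⁻¹ ^ 2 * ‖v‖ ^ 2 : ℝ) : ℂ) / (r : ℂ) = ((‖w‖⁻¹ : ℝ) : ℂ) := by
    have h1 : (‖w‖ : ℂ) ≠ 0 := by exact_mod_cast hwpos.ne'
    have h2 : (‖v‖ : ℂ) ≠ 0 := by exact_mod_cast hvpos.ne'
    rw [hr]
    push_cast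
    field_simp
  rw [hcoef]
  rw [Complex.coe_smul]
end
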